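/- Greedy-pair consistency (Theorem 2, soft Bellman equation): for any Q : S × A × B → ℝ, define the greedy conditional policy π_Q(s,b,a) = exp(Q(s,a,b)/α)/∑_{a'} exp(Q(s,a',b)/α) and the greedy opponent model ρ_Q(s,b) = P(s,b)·(∑_a exp(Q(s,a,b)/α))^α / ∑_{b'} P(s,b')·(∑_a exp(Q(s,a,b')/α))^α. Then (𝒯_{π_Q,ρ_Q}Q)(s,a,b) = (𝒯Q)(s,a,b) for all (s,a,b), where 𝒯 is the soft Bellman operator and 𝒯_{π,ρ} is the policy-evaluation operator. -/

import Mathlib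

/-- The soft Bellman operator
(𝒯Q)(s,a,b) = R(s,a,b) + γ·∑_{s'} p(s,a,b,s')·log ∑_{b'} P(s',b')·(∑_{a'} exp(Q(s',a',b')/α))^α. -/
noncomputable def softBellman {S A B : Type*} [Fintype S] [Fintype A] [Fintype B]
    (α γ : ℝ) (R : S × A × B → ℝ) (p : S → A → B → S → ℝ) (P : S → B → ℝ)
    (Q : S × A × B → ℝ) : S × A × B → ℝ :=
  fun x => R x + γ * ∑ s', p x.1 x.2.1 x.2.2 s' *
    Real.log (∑ b', P s' b' * (∑ a', Real.exp (Q (s', a', b') / α)) ^ α)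

/-- The policy-evaluation operator
(𝒯_{π,ρ}Q)(s,a,b) = R(s,a,b) + γ·∑_{s'} p(s,a,b,s')·( ∑_{b'} ρ(s',b')·( ∑_{a'}
π(s',b',a')·(Q(s',a',b') − α·log π(s',b',a')) ) − ∑_{b'} ρ(s',b')·log(ρ(s',b')/P(s',b')) ). -/
noncomputable def evalOp {S A B : Type*} [Fintype S] [Fintype A] [Fintype B]
    (α γ : ℝ) (R : S × A × B → ℝ) (p : S → A → B → S → ℝ) (P : S → B → ℝ)
    (π : S → B → A → ℝ) (ρ : S → B → ℝ)
    (Q : S × A × B → ℝ) : S × A × B → ℝ :=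
  fun x => R x + γ * ∑ s', p x.1 x.2.1 x.2.2 s' *
    ((∑ b', ρ s' b' *
        (∑ a', π s' b' a' * (Q (s', a', b') - α * Real.log (π s' b' a'))))
      - ∑ b', ρ s' b' * Real.log (ρ s' b' / P s' b'))

/-- The greedy conditional policy π_Q(s,b,a) = exp(Q(s,a,b)/α)/∑_{a'} exp(Q(s,a',b)/α). -/
noncomputable def greedyPolicy {S A B : Type*} [Fintype A]
    (α : ℝ) (Q : S × A × B → ℝ) : S → B → A → ℝ :=
  fun s b a => Real.exp (Q (s, a, b) / α) / ∑ a', Real.exp (Q (s, a', b) / α)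

/-- The greedy opponent model
ρ_Q(s,b) = P(s,b)·(∑_a exp(Q(s,a,b)/α))^α / ∑_{b'} P(s,b')·(∑_a exp(Q(s,a,b')/α))^α. -/
noncomputable def greedyOpponent {S A B : Type*} [Fintype A] [Fintype B]
    (α : ℝ) (P : S → B → ℝ) (Q : S × A × B → ℝ) : S → B → ℝ :=
  fun s b => P s b * (∑ a, Real.exp (Q (s, a, b) / α)) ^ α
    / ∑ b', P s b' * (∑ a, Real.exp (Q (s, a, b') / α)) ^ α

/-- Greedy-pair consistency (Theorem 2, soft Bellman equation): for
any Q, the policy-evaluation backup under the greedy pair (π_Q, ρ_Q) coincides with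
the soft Bellman backup: (𝒯_{π_Q,ρ_Q}Q)(s,a,b) = (𝒯Q)(s,a,b) for all (s,a,b). -/


lemma inner_bracket_eq {A B : Type*} [Fintype A] [Fintype B] [Nonempty A] [Nonempty B]
    (α : ℝ) (hα : 0 < α) (P : B → ℝ) (hP : ∀ b, 0 < P b) (q : A → B → ℝ) :
    (∑ b, (P b * (∑ a, Real.exp (q a b / α)) ^ α
            / ∑ b', P b' * (∑ a, Real.exp (q a b' / α)) ^ α) *
        (∑ a, (Real.exp (q a b / α) / ∑ a', Real.exp (q a' b / α)) *
          (q a b - α * Real.log (Real.exp (q a b / α) / ∑ a', Real.exp (q a' b / α)))))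
      - ∑ b, (P b * (∑ a, Real.exp (q a b / α)) ^ α
            / ∑ b', P b' * (∑ a, Real.exp (q a b' / α)) ^ α) *
          Real.log ((P b * (∑ a, Real.exp (q a b / α)) ^ α
            / ∑ b', P b' * (∑ a, Real.exp (q a b' / α)) ^ α) / P b)
    = Real.log (∑ b, P b * (∑ a, Real.exp (q a b / α)) ^ α) := by
  set E : B → ℝ := fun b => ∑ a, Real.exp (q a b / α) with hE
  have hEpos : ∀ b, 0 < E b := fun b =>
    Finset.sum_pos (fun a _ => Real.exp_pos _) Finset.univ_nonempty
  set Z : ℝ := ∑ b, P b * E b ^ α with hZ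
  have hZpos : 0 < Z :=
    Finset.sum_pos (fun b _ => mul_pos (hP b) (Real.rpow_pos_of_pos (hEpos b) α))
      Finset.univ_nonempty
  -- inner a-sum equals α * log (E b)
  have hinner : ∀ b, (∑ a, (Real.exp (q a b / α) / E b) *
      (q a b - α * Real.log (Real.exp (q a b / α) / E b))) = α * Real.log (E b) := by
    intro b
    have h1 : ∀ a, q a b - α * Real.log (Real.exp (q a b / α) / E b)
        = α * Real.log (E b) := by
      intro a
      rw [Real.log_div (Real.exp_pos _).ne' (hEpos b).ne', Real.log_exp]
      field_simp
      ring
    simp only [h1]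
    rw [← Finset.sum_mul, ← Finset.sum_div]
    rw [div_self (hEpos b).ne', one_mul]
  -- log (ρ/P)
  have hlogratio : ∀ b, Real.log ((P b * E b ^ α / Z) / P b)
      = α * Real.log (E b) - Real.log Z := by
    intro b
    have : (P b * E b ^ α / Z) / P b = E b ^ α / Z := by
      rw [div_div, mul_comm Z (P b), ← div_div, mul_div_cancel_left₀ _ (hP b).ne']
    rw [this, Real.log_div (Real.rpow_pos_of_pos (hEpos b) α).ne' hZpos.ne',
      Real.log_rpow (hEpos b)]
  have hsumρ : (∑ b, P b * E b ^ α / Z) = 1 := by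
    rw [← Finset.sum_div, div_self hZpos.ne']
  calc (∑ b, (P b * E b ^ α / Z) * (∑ a, (Real.exp (q a b / α) / E b) *
          (q a b - α * Real.log (Real.exp (q a b / α) / E b))))
        - ∑ b, (P b * E b ^ α / Z) * Real.log ((P b * E b ^ α / Z) / P b)
      = ∑ b, ((P b * E b ^ α / Z) * (α * Real.log (E b))
          - (P b * E b ^ α / Z) * (α * Real.log (E b) - Real.log Z)) := by
        rw [← Finset.sum_sub_distrib]
        exact Finset.sum_congr rfl fun b _ => by rw [hinner b, hlogratio b]
    _ = ∑ b, (P b * E b ^ α / Z) * Real.log Z := by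
        exact Finset.sum_congr rfl fun b _ => by ring
    _ = Real.log Z := by rw [← Finset.sum_mul, hsumρ, one_mul]

theorem greedy_pair_consistency
    {S A B : Type*} [Fintype S] [Fintype A] [Fintype B]
    [Nonempty S] [Nonempty A] [Nonempty B]
    (α γ : ℝ) (hα : 0 < α) (hγ₀ : 0 ≤ γ) (hγ₁ : γ < 1)
    (R : S × A × B → ℝ)
    (p : S → A → B → S → ℝ)
    (hp_nonneg : ∀ s a b s', 0 ≤ p s a b s') (hp_sum : ∀ s a b, ∑ s', p s a b s' = 1)
    (P : S → B → ℝ) (hP_pos : ∀ s b, 0 < P s b) (hP_sum : ∀ s, ∑ b, P s b = 1)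
    (Q : S × A × B → ℝ) :
    ∀ x : S × A × B,
      evalOp α γ R p P (greedyPolicy α Q) (greedyOpponent α P Q) Q x
        = softBellman α γ R p P Q x := by
  intro x
  unfold evalOp softBellman greedyPolicy greedyOpponent
  congr 2
  refine Finset.sum_congr rfl fun s' _ => ?_
  congr 1
  exact inner_bracket_eq α hα (P s') (hP_pos s') (fun a b => Q (s', a, b))
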